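/- Let $X$ be a Banach space, $p, q > 1$ with $1/p + 1/q = 1$, and $f : [a,b] \to X$ differentiable with $\|f'\| \in L^p[a,b]$. Then for every $s \in [a,b]$: $\left\| f(s) - \frac{1}{b-a}\int_a^b f(t)\,dt \right\| \le \frac{1}{(q+1)^{1/q}}\left[\left(\frac{s-a}{b-a}\right)^{q+1} + \left(\frac{b-s}{b-a}\right)^{q+1}\right]^{1/q} (b-a)^{1/q} \left(\int_a^b \|f'(t)\|^p\,dt\right)^{1/p}$. -/

import Mathlib

open MeasureTheory intervalIntegral Set

lemma aux_smul_ii {X : Type*} [NormedAddCommGroup X] [NormedSpace ℝ X] {g : ℝ → X} {a b : ℝ}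
    (hg : IntervalIntegrable g volume a b) {φ : ℝ → ℝ} (hφ : ContinuousOn φ (Set.uIcc a b)) :
    IntervalIntegrable (fun t => φ t • g t) volume a b := by
  rw [intervalIntegrable_iff] at hg ⊢
  have hg' : IntegrableOn g (Set.uIcc a b) volume :=
    (integrableOn_Icc_iff_integrableOn_Ioc).2 hg
  exact (hg'.continuousOn_smul hφ isCompact_uIcc).mono_set Set.Ioc_subset_Icc_self

theorem stmt8 {X : Type*} [NormedAddCommGroup X] [NormedSpace ℝ X] [CompleteSpace X]
    {a b : ℝ} (hab : a < b) {f f' : ℝ → X}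
    (hderiv : ∀ t ∈ Set.Icc a b, HasDerivAt f (f' t) t)
    (hint : IntervalIntegrable f' volume a b) {p q : ℝ} (hp : 1 < p) (hq : 1 < q) (hpq : 1 / p + 1 / q = 1)
    (hLp : IntervalIntegrable (fun t => ‖f' t‖ ^ p) volume a b)
    {s : ℝ} (hs : s ∈ Set.Icc a b) :
    ‖f s - (b - a)⁻¹ • (∫ t in a..b, f t)‖ ≤
      (1 / (q + 1) ^ (1 / q)) *
        (((s - a) / (b - a)) ^ (q + 1) + ((b - s) / (b - a)) ^ (q + 1)) ^ (1 / q) *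
        (b - a) ^ (1 / q) * (∫ t in a..b, ‖f' t‖ ^ p) ^ (1 / p) := by
  obtain ⟨has, hsb⟩ := hs
  have hba : (0:ℝ) < b - a := by linarith
  have hq0 : (0:ℝ) < q := by linarith
  -- basic continuities / integrabilities
  have hfc : ContinuousOn f (Set.Icc a b) := fun t ht =>
    (hderiv t ht).continuousAt.continuousWithinAt
  have hsub1 : Set.uIcc a s ⊆ Set.Icc a b := by
    rw [Set.uIcc_of_le has]; exact Set.Icc_subset_Icc_right hsb
  have hsub2 : Set.uIcc s b ⊆ Set.Icc a b := by
    rw [Set.uIcc_of_le hsb]; exact Set.Icc_subset_Icc_left has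
  have hf_as : IntervalIntegrable f volume a s := (hfc.mono hsub1).intervalIntegrable
  have hf_sb : IntervalIntegrable f volume s b := (hfc.mono hsub2).intervalIntegrable
  have hsub1' : Set.uIcc a s ⊆ Set.uIcc a b := by
    rw [Set.uIcc_of_le has, Set.uIcc_of_le hab.le]; exact Set.Icc_subset_Icc_right hsb
  have hsub2' : Set.uIcc s b ⊆ Set.uIcc a b := by
    rw [Set.uIcc_of_le hsb, Set.uIcc_of_le hab.le]; exact Set.Icc_subset_Icc_left has
  have hint_as : IntervalIntegrable f' volume a s := hint.mono_set hsub1'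
  have hint_sb : IntervalIntegrable f' volume s b := hint.mono_set hsub2'
  have hsm1 : IntervalIntegrable (fun t => (t - a) • f' t) volume a s :=
    aux_smul_ii hint_as ((continuous_id.sub continuous_const).continuousOn)
  have hsm2 : IntervalIntegrable (fun t => (t - b) • f' t) volume s b :=
    aux_smul_ii hint_sb ((continuous_id.sub continuous_const).continuousOn)
  -- integration by parts
  have h1 : (∫ t in a..s, (f t + (t - a) • f' t)) = (s - a) • f s := by
    have := intervalIntegral.integral_eq_sub_of_hasDerivAt
      (f := fun t => (t - a) • f t) (f' := fun t => f t + (t - a) • f' t)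
      (a := a) (b := s)
      (fun t ht => by
        have h := (((hasDerivAt_id t).sub_const a).smul (hderiv t (hsub1 ht)))
        simp [add_comm] at h; exact h)
      (hf_as.add hsm1)
    simpa using this
  have h2 : (∫ t in s..b, (f t + (t - b) • f' t)) = (b - s) • f s := by
    have := intervalIntegral.integral_eq_sub_of_hasDerivAt
      (f := fun t => (t - b) • f t) (f' := fun t => f t + (t - b) • f' t)
      (a := s) (b := b)
      (fun t ht => by
        have h := (((hasDerivAt_id t).sub_const b).smul (hderiv t (hsub2 ht)))
        simp [add_comm] at h; exact h)
      (hf_sb.add hsm2)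
    rw [this]
    simp [neg_smul, neg_sub]
    rw [← neg_smul, neg_sub]
  -- Montgomery identity
  have hI1 : (∫ t in a..s, (t - a) • f' t) = (s - a) • f s - ∫ t in a..s, f t := by
    rw [← h1, integral_add hf_as hsm1]; abel
  have hI2 : (∫ t in s..b, (t - b) • f' t) = (b - s) • f s - ∫ t in s..b, f t := by
    rw [← h2, integral_add hf_sb hsm2]; abel
  have hadd : (∫ t in a..s, f t) + (∫ t in s..b, f t) = ∫ t in a..b, f t :=
    integral_add_adjacent_intervals hf_as hf_sb
  set K : ℝ → ℝ := fun t => if t ≤ s then t - a else t - b with hKdef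
  have hKi1 : IntervalIntegrable (fun t => K t • f' t) volume a s := by
    rw [intervalIntegrable_iff] at hsm1 ⊢
    refine hsm1.congr_fun (fun t ht => ?_) measurableSet_Ioc
    rw [Set.uIoc_of_le has] at ht
    simp [hKdef, ht.2]
  have hKi2 : IntervalIntegrable (fun t => K t • f' t) volume s b := by
    rw [intervalIntegrable_iff] at hsm2 ⊢
    refine hsm2.congr_fun (fun t ht => ?_) measurableSet_Ioc
    rw [Set.uIoc_of_le hsb] at ht
    simp [hKdef, not_le.2 ht.1]
  have hK1 : (∫ t in a..s, (t - a) • f' t) = ∫ t in a..s, K t • f' t := by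
    refine intervalIntegral.integral_congr (fun t ht => ?_)
    rw [Set.uIcc_of_le has] at ht
    simp [hKdef, ht.2]
  have hK2 : (∫ t in s..b, (t - b) • f' t) = ∫ t in s..b, K t • f' t := by
    refine (intervalIntegral.integral_congr_ae ?_).symm
    refine Filter.Eventually.of_forall (fun t ht => ?_)
    rw [Set.uIoc_of_le hsb] at ht
    simp [hKdef, not_le.2 ht.1]
  have hMont : (∫ t in a..b, K t • f' t) = (b - a) • f s - ∫ t in a..b, f t := by
    rw [← integral_add_adjacent_intervals hKi1 hKi2, ← hK1, ← hK2, hI1, hI2, ← hadd]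
    have h3 : (s - a) • f s + (b - s) • f s = (b - a) • f s := by
      rw [← add_smul]; ring_nf
    rw [← h3]; abel
  have key : f s - (b - a)⁻¹ • (∫ t in a..b, f t)
      = (b - a)⁻¹ • ∫ t in a..b, K t • f' t := by
    rw [hMont, smul_sub, smul_smul, inv_mul_cancel₀ hba.ne', one_smul]
  -- Hölder setup
  set μ : Measure ℝ := volume.restrict (Set.Ioc a b) with hμ
  haveI : IsFiniteMeasure μ := by
    constructor
    rw [hμ, Measure.restrict_apply_univ, Real.volume_Ioc]
    exact ENNReal.ofReal_lt_top
  have hKmeas : Measurable K := by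
    exact Measurable.ite (measurableSet_le measurable_id measurable_const)
      (measurable_id.sub measurable_const) (measurable_id.sub measurable_const)
  have hp0 : (0:ℝ) < p := by linarith
  have hpq' : Real.HolderConjugate q p :=
    ⟨by rw [inv_one, inv_eq_one_div, inv_eq_one_div]; linarith, hq0, hp0⟩
  have hK_mem : MemLp (fun t => |K t|) (ENNReal.ofReal q) μ := by
    refine MemLp.of_bound hKmeas.abs.aestronglyMeasurable (b - a) ?_
    rw [hμ]
    refine (ae_restrict_iff' measurableSet_Ioc).2 (Filter.Eventually.of_forall fun t ht => ?_)
    rw [Real.norm_eq_abs, abs_abs]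
    by_cases h : t ≤ s
    · rw [show K t = t - a from if_pos h,
        abs_of_nonneg (by linarith [ht.1] : (0:ℝ) ≤ t - a)]
      linarith [ht.2]
    · rw [show K t = t - b from if_neg h,
        abs_of_nonpos (by linarith [ht.2] : t - b ≤ 0)]
      linarith [ht.1]
  have hf'meas : AEStronglyMeasurable f' μ := hint.1.aestronglyMeasurable
  have hpne : ENNReal.ofReal p ≠ 0 := by
    simp [ENNReal.ofReal_eq_zero, not_le, hp0]
  have hf'_Lp : MemLp f' (ENNReal.ofReal p) μ := by
    refine (memLp_norm_rpow_iff hf'meas hpne ENNReal.ofReal_ne_top).1 ?_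
    rw [ENNReal.toReal_ofReal hp0.le, ENNReal.div_self hpne ENNReal.ofReal_ne_top,
      memLp_one_iff_integrable]
    exact hLp.1
  have holder := integral_mul_le_Lp_mul_Lq_of_nonneg (μ := μ) hpq'
    (Filter.Eventually.of_forall fun t => abs_nonneg (K t))
    (Filter.Eventually.of_forall fun t => norm_nonneg (f' t)) hK_mem hf'_Lp.norm
  have hnorm : ‖f s - (b - a)⁻¹ • (∫ t in a..b, f t)‖
      ≤ (b - a)⁻¹ * ∫ t, |K t| * ‖f' t‖ ∂μ := by
    rw [key, norm_smul, Real.norm_eq_abs, abs_of_pos (inv_pos.2 hba)]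
    refine mul_le_mul_of_nonneg_left ?_ (inv_pos.2 hba).le
    refine (intervalIntegral.norm_integral_le_integral_norm hab.le).trans_eq ?_
    rw [integral_of_le hab.le, hμ]
    congr 1
    ext t
    rw [norm_smul, Real.norm_eq_abs]
  -- compute the q-integral of |K|
  have hcontq : Continuous (fun x : ℝ => x ^ q) := by
    rw [continuous_iff_continuousAt]
    exact fun x => Real.continuousAt_rpow_const x q (Or.inr hq0.le)
  have hKq1 : IntervalIntegrable (fun t => |K t| ^ q) volume a s := by
    have hbase : IntervalIntegrable (fun t => (t - a) ^ q) volume a s :=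
      (hcontq.comp (continuous_id.sub continuous_const)).continuousOn.intervalIntegrable
    rw [intervalIntegrable_iff] at hbase ⊢
    refine hbase.congr_fun (fun t ht => ?_) measurableSet_Ioc
    rw [Set.uIoc_of_le has] at ht
    have hKt : K t = t - a := by simp [hKdef, ht.2]
    rw [hKt, abs_of_nonneg (by linarith [ht.1] : (0:ℝ) ≤ t - a)]
  have hKq2 : IntervalIntegrable (fun t => |K t| ^ q) volume s b := by
    have hbase : IntervalIntegrable (fun t => (b - t) ^ q) volume s b :=
      (hcontq.comp (continuous_const.sub continuous_id)).continuousOn.intervalIntegrable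
    rw [intervalIntegrable_iff] at hbase ⊢
    refine hbase.congr_fun (fun t ht => ?_) measurableSet_Ioc
    rw [Set.uIoc_of_le hsb] at ht
    have hKt : K t = t - b := by simp [hKdef, not_le.2 ht.1]
    rw [hKt, abs_of_nonpos (by linarith [ht.2] : t - b ≤ 0), neg_sub]
  have e1 : (∫ t in a..s, |K t| ^ q) = ∫ t in a..s, (t - a) ^ q := by
    refine intervalIntegral.integral_congr (fun t ht => ?_)
    rw [Set.uIcc_of_le has] at ht
    have hKt : K t = t - a := by simp [hKdef, ht.2]
    rw [hKt, abs_of_nonneg (by linarith [ht.1] : (0:ℝ) ≤ t - a)]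
  have e2 : (∫ t in s..b, |K t| ^ q) = ∫ t in s..b, (b - t) ^ q := by
    refine intervalIntegral.integral_congr_ae (Filter.Eventually.of_forall fun t ht => ?_)
    rw [Set.uIoc_of_le hsb] at ht
    have hKt : K t = t - b := by simp [hKdef, not_le.2 ht.1]
    rw [hKt, abs_of_nonpos (by linarith [ht.2] : t - b ≤ 0), neg_sub]
  have v1 : (∫ t in a..s, (t - a) ^ q) = (s - a) ^ (q + 1) / (q + 1) := by
    rw [intervalIntegral.integral_comp_sub_right (fun x => x ^ q) a, sub_self,
      integral_rpow (Or.inl (by linarith : (-1:ℝ) < q)),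
      Real.zero_rpow (by linarith : q + 1 ≠ 0), sub_zero]
  have v2 : (∫ t in s..b, (b - t) ^ q) = (b - s) ^ (q + 1) / (q + 1) := by
    rw [intervalIntegral.integral_comp_sub_left (fun x => x ^ q) b, sub_self,
      integral_rpow (Or.inl (by linarith : (-1:ℝ) < q)),
      Real.zero_rpow (by linarith : q + 1 ≠ 0), sub_zero]
  have hT : (∫ t, |K t| ^ q ∂μ)
      = ((s - a) ^ (q + 1) + (b - s) ^ (q + 1)) / (q + 1) := by
    rw [hμ, ← integral_of_le hab.le, ← integral_add_adjacent_intervals hKq1 hKq2,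
      e1, e2, v1, v2]
    ring
  have hL : (∫ t, ‖f' t‖ ^ p ∂μ) = ∫ t in a..b, ‖f' t‖ ^ p := by
    rw [hμ, ← integral_of_le hab.le]
  -- assemble
  have hA : (0:ℝ) ≤ s - a := by linarith
  have hB : (0:ℝ) ≤ b - s := by linarith
  have hS : (0:ℝ) ≤ (s - a) ^ (q + 1) + (b - s) ^ (q + 1) := by positivity
  have hLnn : (0:ℝ) ≤ ∫ t, ‖f' t‖ ^ p ∂μ :=
    integral_nonneg (fun t => Real.rpow_nonneg (norm_nonneg _) p)
  refine hnorm.trans ?_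
  refine (mul_le_mul_of_nonneg_left holder (inv_pos.2 hba).le).trans_eq ?_
  rw [hT, hL.symm]
  -- pure algebra with rpow
  rw [Real.div_rpow hA hba.le, Real.div_rpow hB hba.le, ← add_div,
    Real.div_rpow hS (by positivity : (0:ℝ) ≤ (b - a) ^ (q + 1)),
    Real.div_rpow hS (by linarith : (0:ℝ) ≤ q + 1),
    ← Real.rpow_mul hba.le]
  have hcpow : (b - a) ^ ((q + 1) * (1 / q)) = (b - a) ^ (1 / q) * (b - a) := by
    rw [show (q + 1) * (1 / q) = 1 / q + 1 by field_simp; ring,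
      Real.rpow_add hba, Real.rpow_one]
  rw [hcpow]
  have h1 : ((q:ℝ) + 1) ^ (1 / q) > 0 := Real.rpow_pos_of_pos (by linarith) _
  have h2 : (0:ℝ) < (b - a) ^ (1 / q) := Real.rpow_pos_of_pos hba _
  field_simp
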